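/- Let R ≥ 0, s > 0, and μ, y, t ∈ ℝ with |y − μ| ≤ R·s. Set I = max(t − y, 0) and EI = s·τ((t − μ)/s), where τ(z) = z·Φ(z) + φ(z). Then I − R·s ≤ EI ≤ I + (R + (2π)^(−1/2))·s. -/

import Mathlib

open MeasureTheory ProbabilityTheory Real

/-- The standard normal cumulative distribution function `Φ`. -/
noncomputable def stdNormalCDF (z : ℝ) : ℝ :=
  ((gaussianReal 0 1) (Set.Iic z)).toReal

/-- The standard normal density `φ(z) = (2π)^(−1/2) exp(−z²/2)`. -/
noncomputable def stdNormalPDF (z : ℝ) : ℝ :=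
  (Real.sqrt (2 * Real.pi))⁻¹ * Real.exp (-z ^ 2 / 2)

/-- `τ(z) = z·Φ(z) + φ(z)`. -/
noncomputable def tau (z : ℝ) : ℝ := z * stdNormalCDF z + stdNormalPDF z

open Set Filter

lemma stdNormalPDF_nonneg (z : ℝ) : 0 ≤ stdNormalPDF z := by
  unfold stdNormalPDF; positivity

lemma stdNormalPDF_even (z : ℝ) : stdNormalPDF (-z) = stdNormalPDF z := by
  simp [stdNormalPDF]

lemma stdNormalPDF_le (z : ℝ) : stdNormalPDF z ≤ (Real.sqrt (2 * Real.pi))⁻¹ := by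
  have h : Real.exp (-z ^ 2 / 2) ≤ 1 := Real.exp_le_one_iff.mpr (by nlinarith [sq_nonneg z])
  calc stdNormalPDF z ≤ (Real.sqrt (2 * Real.pi))⁻¹ * 1 := by
        exact mul_le_mul_of_nonneg_left h (by positivity)
    _ = _ := mul_one _

lemma stdNormalPDF_eq_gaussian (x : ℝ) : gaussianPDFReal 0 1 x = stdNormalPDF x := by
  simp [gaussianPDFReal, stdNormalPDF]

lemma stdNormalCDF_eq_integral (a : ℝ) :
    stdNormalCDF a = ∫ x in Iic a, stdNormalPDF x := by
  unfold stdNormalCDF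
  rw [gaussianReal_apply_eq_integral 0 one_ne_zero,
    ENNReal.toReal_ofReal (integral_nonneg fun x => gaussianPDFReal_nonneg 0 1 x)]
  exact setIntegral_congr_fun measurableSet_Iic fun x _ => stdNormalPDF_eq_gaussian x

lemma stdNormalCDF_nonneg (z : ℝ) : 0 ≤ stdNormalCDF z := ENNReal.toReal_nonneg

lemma stdNormalCDF_le_one (z : ℝ) : stdNormalCDF z ≤ 1 := by
  unfold stdNormalCDF
  rw [← ENNReal.toReal_one]
  exact ENNReal.toReal_mono ENNReal.one_ne_top prob_le_one

lemma exp_form (x : ℝ) : Real.exp (-x ^ 2 / 2) = Real.exp (-(2⁻¹ : ℝ) * x ^ 2) := by ring_nf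

lemma pdf_integrable : Integrable stdNormalPDF := by
  have h := (integrable_exp_neg_mul_sq (b := (2⁻¹ : ℝ)) (by norm_num)).const_mul
    (Real.sqrt (2 * Real.pi))⁻¹
  refine h.congr (ae_of_all _ fun x => ?_)
  simp [stdNormalPDF, exp_form]

lemma xpdf_integrable : Integrable (fun x => x * stdNormalPDF x) := by
  have h := (integrable_mul_exp_neg_mul_sq (b := (2⁻¹ : ℝ)) (by norm_num)).const_mul
    (Real.sqrt (2 * Real.pi))⁻¹
  refine h.congr (ae_of_all _ fun x => ?_)
  simp [stdNormalPDF, exp_form]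
  ring

lemma pdf_hasDerivAt (x : ℝ) :
    HasDerivAt stdNormalPDF (-x * stdNormalPDF x) x := by
  have h : HasDerivAt (fun y : ℝ => -y ^ 2 / 2) (-x) x := by
    have := ((hasDerivAt_pow 2 x).neg.div_const 2)
    refine this.congr_deriv ?_
    ring
  have := (h.exp).const_mul (Real.sqrt (2 * Real.pi))⁻¹
  refine this.congr_deriv ?_
  unfold stdNormalPDF
  ring

lemma pdf_tendsto_atBot : Tendsto stdNormalPDF atBot (nhds 0) := by
  have h0 : Tendsto (fun x : ℝ => x ^ 2) atBot atTop :=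
    ((tendsto_pow_atTop (two_ne_zero)).comp (tendsto_neg_atBot_atTop (G := ℝ))).congr
      fun x => by simp
  have h1 : Tendsto (fun x : ℝ => -x ^ 2 / 2) atBot atBot :=
    (tendsto_neg_atTop_atBot.comp h0).atBot_div_const (by norm_num)
  have := (Real.tendsto_exp_atBot.comp h1).const_mul (Real.sqrt (2 * Real.pi))⁻¹
  rw [mul_zero] at this
  exact this

lemma pdf_tendsto_atTop : Tendsto stdNormalPDF atTop (nhds 0) := by
  have h0 : Tendsto (fun x : ℝ => x ^ 2) atTop atTop := tendsto_pow_atTop two_ne_zero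
  have h1 : Tendsto (fun x : ℝ => -x ^ 2 / 2) atTop atBot :=
    (tendsto_neg_atTop_atBot.comp h0).atBot_div_const (by norm_num)
  have := (Real.tendsto_exp_atBot.comp h1).const_mul (Real.sqrt (2 * Real.pi))⁻¹
  rw [mul_zero] at this
  exact this

lemma integral_xpdf_Iic (a : ℝ) :
    ∫ x in Iic a, -x * stdNormalPDF x = stdNormalPDF a := by
  have h := integral_Iic_of_hasDerivAt_of_tendsto (f := stdNormalPDF)
    (f' := fun x => -x * stdNormalPDF x) (a := a) (m := 0)
    (pdf_hasDerivAt a).continuousAt.continuousWithinAt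
    (fun x _ => pdf_hasDerivAt x)
    ((xpdf_integrable.neg.congr (ae_of_all _ fun x => by simp only [Pi.neg_apply]; ring)).integrableOn)
    pdf_tendsto_atBot
  simpa using h

lemma integral_xpdf_Ioi (a : ℝ) :
    ∫ x in Ioi a, x * stdNormalPDF x = stdNormalPDF a := by
  have hderiv : ∀ x ∈ Ioi a, HasDerivAt (fun y => -stdNormalPDF y) (x * stdNormalPDF x) x := by
    intro x _
    have := (pdf_hasDerivAt x).neg
    refine this.congr_deriv ?_
    ring
  have h := integral_Ioi_of_hasDerivAt_of_tendsto (f := fun y => -stdNormalPDF y)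
    (f' := fun x => x * stdNormalPDF x) (a := a) (m := 0)
    (pdf_hasDerivAt a).neg.continuousAt.continuousWithinAt
    hderiv xpdf_integrable.integrableOn
    (by simpa using pdf_tendsto_atTop.neg)
  simpa using h

/-- Mills-type bound on the left tail. -/
lemma mills_Iic {a : ℝ} (ha : 0 < a) : a * stdNormalCDF (-a) ≤ stdNormalPDF a := by
  have hle : ∫ x in Iic (-a), a * stdNormalPDF x ≤ ∫ x in Iic (-a), -x * stdNormalPDF x := by
    refine setIntegral_mono_on ((pdf_integrable.const_mul a).integrableOn)
      ((xpdf_integrable.neg.congr (ae_of_all _ fun x => by simp only [Pi.neg_apply]; ring)).integrableOn)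
      measurableSet_Iic fun x hx => ?_
    have hx' : a ≤ -x := by
      simp only [mem_Iic] at hx; linarith
    exact mul_le_mul_of_nonneg_right hx' (stdNormalPDF_nonneg x)
  rw [integral_const_mul, ← stdNormalCDF_eq_integral, integral_xpdf_Iic,
    stdNormalPDF_even] at hle
  exact hle

/-- Mills-type bound on the right tail. -/
lemma mills_Ioi {a : ℝ} (ha : 0 < a) : a * (1 - stdNormalCDF a) ≤ stdNormalPDF a := by
  have htail : (1 : ℝ) - stdNormalCDF a = ∫ x in Ioi a, stdNormalPDF x := by
    have hc : ((gaussianReal 0 1) (Ioi a)).toReal = 1 - stdNormalCDF a := by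
      have h1 : (gaussianReal 0 1) (Ioi a) = 1 - (gaussianReal 0 1) (Iic a) := by
        rw [← Set.compl_Iic]
        exact prob_compl_eq_one_sub measurableSet_Iic
      rw [h1, ENNReal.toReal_sub_of_le prob_le_one ENNReal.one_ne_top, ENNReal.toReal_one]
      rfl
    rw [← hc, gaussianReal_apply_eq_integral 0 one_ne_zero,
      ENNReal.toReal_ofReal (integral_nonneg fun x => gaussianPDFReal_nonneg 0 1 x)]
    exact setIntegral_congr_fun measurableSet_Ioi fun x _ => stdNormalPDF_eq_gaussian x
  have hle : ∫ x in Ioi a, a * stdNormalPDF x ≤ ∫ x in Ioi a, x * stdNormalPDF x := by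
    refine setIntegral_mono_on ((pdf_integrable.const_mul a).integrableOn)
      xpdf_integrable.integrableOn measurableSet_Ioi fun x hx => ?_
    exact mul_le_mul_of_nonneg_right (le_of_lt hx) (stdNormalPDF_nonneg x)
  rw [integral_const_mul, integral_xpdf_Ioi] at hle
  rw [htail]
  exact hle

lemma tau_nonneg (z : ℝ) : 0 ≤ tau z := by
  unfold tau
  rcases le_or_gt 0 z with hz | hz
  · have := mul_nonneg hz (stdNormalCDF_nonneg z)
    linarith [stdNormalPDF_nonneg z]
  · have h := mills_Iic (a := -z) (by linarith)
    rw [neg_neg, stdNormalPDF_even] at h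
    linarith

lemma tau_ge_self (z : ℝ) : z ≤ tau z := by
  unfold tau
  rcases le_or_gt z 0 with hz | hz
  · nlinarith [stdNormalCDF_le_one z, stdNormalPDF_nonneg z]
  · nlinarith [mills_Ioi hz]

lemma tau_ge_max (z : ℝ) : max z 0 ≤ tau z := max_le (tau_ge_self z) (tau_nonneg z)

lemma tau_le_max_add (z : ℝ) : tau z ≤ max z 0 + (Real.sqrt (2 * Real.pi))⁻¹ := by
  unfold tau
  have h1 : z * stdNormalCDF z ≤ max z 0 := by
    rcases le_or_gt 0 z with hz | hz
    · calc z * stdNormalCDF z ≤ z * 1 := mul_le_mul_of_nonneg_left (stdNormalCDF_le_one z) hz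
        _ = z := mul_one z
        _ ≤ max z 0 := le_max_left _ _
    · have : z * stdNormalCDF z ≤ 0 := mul_nonpos_of_nonpos_of_nonneg hz.le
        (stdNormalCDF_nonneg z)
      exact this.trans (le_max_right _ _)
  linarith [stdNormalPDF_le z]

/-- Two-sided bound on expected improvement: if `|y − μ| ≤ R·s` with `R ≥ 0` and
`s > 0`, then with `I = max(t − y, 0)` and `EI = s·τ((t − μ)/s)` we have
`I − R·s ≤ EI ≤ I + (R + (2π)^(−1/2))·s`. -/
theorem expected_improvement_two_sided_bound
    (R s μ y t : ℝ) (hR : 0 ≤ R) (hs : 0 < s) (hy : |y - μ| ≤ R * s) :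
    max (t - y) 0 - R * s ≤ s * tau ((t - μ) / s)
    ∧ s * tau ((t - μ) / s)
        ≤ max (t - y) 0 + (R + (Real.sqrt (2 * Real.pi))⁻¹) * s := by
  set u := (t - μ) / s with hu
  have hsu : s * max u 0 = max (t - μ) 0 := by
    rw [mul_max_of_nonneg _ _ hs.le, mul_zero, hu, mul_div_cancel₀ _ (ne_of_gt hs)]
  have habs : |max (t - μ) 0 - max (t - y) 0| ≤ R * s := by
    calc |max (t - μ) 0 - max (t - y) 0| ≤ |(t - μ) - (t - y)| :=
          abs_max_sub_max_le_abs _ _ _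
      _ = |y - μ| := by ring_nf
      _ ≤ R * s := hy
  rw [abs_le] at habs
  have hlow : max (t - μ) 0 ≤ s * tau u := by
    rw [← hsu]
    exact mul_le_mul_of_nonneg_left (tau_ge_max u) hs.le
  have hhigh : s * tau u ≤ max (t - μ) 0 + (Real.sqrt (2 * Real.pi))⁻¹ * s := by
    have := mul_le_mul_of_nonneg_left (tau_le_max_add u) hs.le
    rw [mul_add, hsu] at this
    linarith
  constructor
  · linarith
  · nlinarith
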